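/- Let A = XP_N(p|x|z) be an XP operator with x binary and x ≠ 0 (so A is non-diagonal). Then there exists a positive integer m with A^m a scalar multiple of the identity, every such m is even, and the least such m equals 2 * d₂, where d₂ is the least positive integer with (A^2)^(d₂) a scalar multiple of the identity (note A^2 is a diagonal XP operator). -/

import Mathlib

open Matrix

/-- `ω = exp(πi/N)`. -/
noncomputable def omN (N : ℕ) : ℂ := Complex.exp (Real.pi * Complex.I / N)

/-- The Pauli X matrix. -/
def Xm : Matrix (Fin 2) (Fin 2) ℂ := !![0, 1; 1, 0]

/-- The precision-`N` phase matrix `P = diag(1, ω²)`. -/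
noncomputable def Pm (N : ℕ) : Matrix (Fin 2) (Fin 2) ℂ := !![1, 0; 0, (omN N) ^ 2]

/-- The precision-`N` XP operator `XP_N(p|x|z)` on `n` qubits, the matrix indexed by bit
strings whose `(f, e)` entry is `ω^p * ∏ i, (X^(x i) * P^(z i)) (f i) (e i)`. -/
noncomputable def XP (N n : ℕ) (p : ℤ) (x z : Fin n → ℤ) :
    Matrix (Fin n → Fin 2) (Fin n → Fin 2) ℂ :=
  Matrix.of fun f e => (omN N) ^ p * ∏ i, ((Xm ^ (x i)) * (Pm N) ^ (z i)) (f i) (e i)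

/-- The antisymmetric operator `D_N(z) = XP_N(∑ i, z i | 0 | -z)`. -/
noncomputable def DN (N n : ℕ) (z : Fin n → ℤ) :
    Matrix (Fin n → Fin 2) (Fin n → Fin 2) ℂ :=
  XP N n (∑ i, z i) 0 (-z)

/-- A vector is binary if every entry is 0 or 1. -/
def IsBinary {n : ℕ} (x : Fin n → ℤ) : Prop := ∀ i, x i = 0 ∨ x i = 1

/- ============ auxiliary lemmas ============ -/

lemma omN_ne_zero (N : ℕ) : omN N ≠ 0 := Complex.exp_ne_zero _

lemma omN_pow_two_mul (N : ℕ) (hN : N ≠ 0) : omN N ^ (2 * N) = 1 := by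
  rw [omN, ← Complex.exp_nat_mul]
  rw [show ((2 * N : ℕ) : ℂ) * (Real.pi * Complex.I / N) = 2 * Real.pi * Complex.I by
    have : (N : ℂ) ≠ 0 := Nat.cast_ne_zero.mpr hN
    push_cast; field_simp]
  exact Complex.exp_two_pi_mul_I

lemma diag2 (c : ℂ) : !![1, 0; 0, c] = Matrix.diagonal ![1, c] := by
  ext i j; fin_cases i <;> fin_cases j <;> simp [Matrix.diagonal]

lemma diag_zpow (c : ℂ) (hc : c ≠ 0) (k : ℤ) :
    (Matrix.diagonal ![1, c]) ^ k = Matrix.diagonal ![1, c ^ k] := by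
  have hpow : ∀ m : ℕ, (Matrix.diagonal ![(1:ℂ), c]) ^ m = Matrix.diagonal ![1, c ^ m] := by
    intro m
    rw [Matrix.diagonal_pow]
    have harg : (![1, c] : Fin 2 → ℂ) ^ m = ![1, c ^ m] := by
      funext i; fin_cases i <;> simp [Pi.pow_apply]
    rw [harg]
  cases k with
  | ofNat m => simpa using hpow m
  | negSucc m =>
      rw [zpow_negSucc, hpow, zpow_negSucc]
      apply Matrix.inv_eq_right_inv
      rw [Matrix.diagonal_mul_diagonal]
      have harg : (fun i => (![1, c ^ (m+1)] : Fin 2 → ℂ) i * ![1, (c ^ (m+1))⁻¹] i) = 1 := by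
        funext i; fin_cases i <;> simp [mul_inv_cancel₀ (pow_ne_zero _ hc)]
      rw [harg]; exact Matrix.diagonal_one

lemma Pm_zpow (N : ℕ) (k : ℤ) : (Pm N) ^ k = !![1, 0; 0, (omN N) ^ (2 * k)] := by
  have hc : (omN N) ^ 2 ≠ 0 := pow_ne_zero _ (omN_ne_zero N)
  have h : (omN N) ^ (2 * k) = ((omN N) ^ 2) ^ k := by
    rw [← zpow_natCast (omN N) 2, ← _root_.zpow_mul]; norm_num
  rw [Pm, diag2, diag_zpow _ hc, h]
  exact (diag2 _).symm

lemma zpow_sum' {ι : Type*} (a : ℂ) (ha : a ≠ 0) (s : Finset ι) (t : ι → ℤ) :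
    a ^ (∑ i ∈ s, t i) = ∏ i ∈ s, a ^ t i := by
  classical
  induction s using Finset.induction_on with
  | empty => simp
  | insert _ _ h ih => rw [Finset.sum_insert h, Finset.prod_insert h, zpow_add₀ ha, ih]

lemma factor (N : ℕ) (xi zi : ℤ) (hxi : xi = 0 ∨ xi = 1) (b : Fin 2) :
    ∃ t : ℤ, ∀ a : Fin 2,
      (Xm ^ xi * Pm N ^ zi) a b
        = if a = b + (if xi = 0 then 0 else 1) then (omN N) ^ t else 0 := by
  rcases hxi with h | h <;> subst h
  · refine ⟨if b = 0 then 0 else 2 * zi, fun a => ?_⟩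
    rw [zpow_zero, one_mul, Pm_zpow]
    fin_cases a <;> fin_cases b <;> simp
  · refine ⟨if b = 0 then 0 else 2 * zi, fun a => ?_⟩
    rw [zpow_one, Pm_zpow, Xm]
    fin_cases a <;> fin_cases b <;>
      simp [Matrix.mul_apply, Fin.sum_univ_two]

lemma XP_apply_struct (N n : ℕ) (p : ℤ) (x z : Fin n → ℤ) (hx : IsBinary x) :
    ∃ T : (Fin n → Fin 2) → ℤ, ∀ e f : Fin n → Fin 2,
      XP N n p x z f e =
        if f = (fun i => e i + (if x i = 0 then 0 else 1)) then omN N ^ T e else 0 := by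
  classical
  have hω := omN_ne_zero N
  choose t ht using fun (i : Fin n) (b : Fin 2) => factor N (x i) (z i) (hx i) b
  refine ⟨fun e => p + ∑ i, t i (e i), fun e f => ?_⟩
  by_cases hf : f = (fun i => e i + (if x i = 0 then 0 else 1))
  · rw [if_pos hf]
    subst hf
    show omN N ^ p * ∏ i, _ = _
    have hval : ∀ i ∈ Finset.univ,
        ((Xm ^ x i) * (Pm N) ^ (z i)) (e i + (if x i = 0 then 0 else 1)) (e i)
          = omN N ^ t i (e i) := by
      intro i _; rw [ht i (e i), if_pos rfl]
    rw [Finset.prod_congr rfl hval, ← zpow_sum' _ hω, ← zpow_add₀ hω]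
  · rw [if_neg hf]
    have : ∃ i, f i ≠ e i + (if x i = 0 then 0 else 1) := by
      by_contra h; push_neg at h; exact hf (funext h)
    obtain ⟨i, hi⟩ := this
    show omN N ^ p * ∏ j, _ = (0:ℂ)
    rw [Finset.prod_eq_zero (Finset.mem_univ i) (by rw [ht i (e i), if_neg hi]), mul_zero]

/-- **Degree of a non-diagonal XP operator**: for `A = XP_N(p|x|z)` with `x` binary and
nonzero, some positive power of `A` is a scalar multiple of the identity, every such power is
even, and the least one equals `2 d₂` where `d₂` is the least positive integer with `(A²)^(d₂)`
a scalar multiple of the identity. -/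
theorem XP_nondiag_degree (N n : ℕ) (hN : 2 ≤ N) (hn : 1 ≤ n) (p : ℤ) (x z : Fin n → ℤ)
    (hx : IsBinary x) (hx0 : x ≠ 0) :
    (∃ m : ℕ, 0 < m ∧ ∃ c : ℂ,
        (XP N n p x z) ^ m = c • (1 : Matrix (Fin n → Fin 2) (Fin n → Fin 2) ℂ)) ∧
      (∀ m : ℕ, 0 < m →
        (∃ c : ℂ, (XP N n p x z) ^ m = c • (1 : Matrix (Fin n → Fin 2) (Fin n → Fin 2) ℂ)) →
        Even m) ∧
      (∀ d₂ : ℕ,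
        IsLeast {m : ℕ | 0 < m ∧ ∃ c : ℂ,
          ((XP N n p x z) ^ 2) ^ m = c • (1 : Matrix (Fin n → Fin 2) (Fin n → Fin 2) ℂ)} d₂ →
        IsLeast {m : ℕ | 0 < m ∧ ∃ c : ℂ,
          (XP N n p x z) ^ m = c • (1 : Matrix (Fin n → Fin 2) (Fin n → Fin 2) ℂ)} (2 * d₂)) := by
  classical
  have hω := omN_ne_zero N
  obtain ⟨T, hT⟩ := XP_apply_struct N n p x z hx
  set A := XP N n p x z with hA
  set σ : (Fin n → Fin 2) → (Fin n → Fin 2) :=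
    fun e i => e i + (if x i = 0 then 0 else 1) with hσ
  have hT' : ∀ e f, A f e = if f = σ e then omN N ^ T e else 0 := hT
  have hadd2 : ∀ a : Fin 2, a + 1 + 1 = a := by decide
  have hadd1 : ∀ a : Fin 2, a + 1 ≠ a := by decide
  have hσσ : ∀ e, σ (σ e) = e := by
    intro e; funext i
    by_cases h : x i = 0 <;> simp [hσ, h, hadd2]
  have hσne : ∀ e, σ e ≠ e := by
    intro e heq
    have hex : ∃ i, x i ≠ 0 := by
      by_contra h; push_neg at h; exact hx0 (funext h)
    obtain ⟨i, hi⟩ := hex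
    have := congrFun heq i
    simp only [hσ, if_neg hi] at this
    exact hadd1 (e i) this
  -- structure of powers
  have hpow : ∀ m : ℕ, ∃ S : (Fin n → Fin 2) → ℤ,
      ∀ e f, (A ^ m) f e = if f = σ^[m] e then omN N ^ S e else 0 := by
    intro m
    induction m with
    | zero =>
        refine ⟨0, fun e f => ?_⟩
        simp [Matrix.one_apply]
    | succ m ih =>
        obtain ⟨S, hS⟩ := ih
        refine ⟨fun e => S (σ e) + T e, fun e f => ?_⟩
        rw [pow_succ, Matrix.mul_apply]
        rw [Finset.sum_eq_single (σ e)]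
        · rw [hS (σ e) f, hT' e (σ e), if_pos rfl, Function.iterate_succ_apply]
          by_cases h : f = σ^[m] (σ e) <;> simp [h, zpow_add₀ hω]
        · intro g _ hg
          rw [hT' e g, if_neg hg, mul_zero]
        · simp
  -- even iterates are the identity
  have hiter : ∀ (k : ℕ) (e : Fin n → Fin 2), σ^[2 * k] e = e := by
    intro k
    induction k with
    | zero => intro e; simp
    | succ k ih =>
        intro e
        have : 2 * (k + 1) = 2 * k + 2 := by ring
        rw [this, Function.iterate_add_apply]
        rw [show σ^[2] e = e by simp [Function.iterate_succ_apply, hσσ], ih]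
  -- A² is diagonal with ω-power entries
  obtain ⟨S2, hS2⟩ := hpow 2
  have hA2 : A ^ 2 = Matrix.diagonal (fun e => omN N ^ S2 e) := by
    ext f e
    rw [hS2 e f, show σ^[2] e = e from hiter 1 e, Matrix.diagonal_apply]
    by_cases h : f = e <;> simp [h]
  have hN0 : N ≠ 0 := by omega
  -- Part 1: existence
  have hexist : ∃ m : ℕ, 0 < m ∧ ∃ c : ℂ,
      A ^ m = c • (1 : Matrix (Fin n → Fin 2) (Fin n → Fin 2) ℂ) := by
    refine ⟨2 * (2 * N), by positivity, 1, ?_⟩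
    rw [pow_mul, hA2, Matrix.diagonal_pow, one_smul]
    have : ((fun e => omN N ^ S2 e) ^ (2 * N) : (Fin n → Fin 2) → ℂ) = fun _ => 1 := by
      funext e
      rw [Pi.pow_apply, ← zpow_natCast (omN N ^ S2 e) (2 * N), ← _root_.zpow_mul, mul_comm,
        _root_.zpow_mul, zpow_natCast, omN_pow_two_mul N hN0, _root_.one_zpow]
    rw [this]; exact Matrix.diagonal_one
  -- Part 2: evenness
  have heven : ∀ m : ℕ, 0 < m →
      (∃ c : ℂ, A ^ m = c • (1 : Matrix (Fin n → Fin 2) (Fin n → Fin 2) ℂ)) → Even m := by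
    intro m hm ⟨c, hc⟩
    by_contra hodd
    rw [Nat.not_even_iff_odd] at hodd
    obtain ⟨k, hk⟩ := hodd
    obtain ⟨S, hS⟩ := hpow m
    set e0 : Fin n → Fin 2 := fun _ => 0 with he0
    have hit : σ^[m] e0 = σ e0 := by
      rw [hk, Function.iterate_add_apply, Function.iterate_one, hiter k (σ e0)]
    have h1 : (A ^ m) (σ e0) e0 = omN N ^ S e0 := by
      rw [hS e0 (σ e0), if_pos (hit.symm)]
    have h2 : (A ^ m) (σ e0) e0 = 0 := by
      rw [hc, Matrix.smul_apply, Matrix.one_apply, if_neg (hσne e0), smul_zero]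
    exact zpow_ne_zero _ hω (h1 ▸ h2)
  refine ⟨hexist, heven, ?_⟩
  -- Part 3
  rintro d₂ ⟨⟨hd2pos, c2, hc2⟩, hlb⟩
  constructor
  · exact ⟨by positivity, c2, by rw [pow_mul]; exact hc2⟩
  · rintro m ⟨hmpos, c, hc⟩
    obtain ⟨k, hk⟩ := heven m hmpos ⟨c, hc⟩
    have hkpos : 0 < k := by omega
    have hk' : k ∈ {m : ℕ | 0 < m ∧ ∃ c : ℂ,
        (A ^ 2) ^ m = c • (1 : Matrix (Fin n → Fin 2) (Fin n → Fin 2) ℂ)} := by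
      refine ⟨hkpos, c, ?_⟩
      rw [← pow_mul, show 2 * k = m by omega]; exact hc
    have := hlb hk'
    omega
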